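/- (Well-balanced property of the full scheme, Theorem 4.) Suppose u_i = 0 for all i ∈ ℤ and the discrete hydrostatic equilibrium p_{i+1} − p_i + ρ̄_{i+1/2}·(Φ_{i+1} − Φ_i) = 0 holds at every interface. Then the Godunov update leaves the data unchanged: ω_i^{n+1} = ω_i^n for all i ∈ ℤ, i.e. the updated density, momentum and total energy equal the initial ones. -/

import Mathlib

/-- Sign function with the convention `sgn 0 = 1`. -/
noncomputable def sgn (x : ℝ) : ℝ := if x < 0 then -1 else 1

/-- Data at one interface of the scheme: Mach number, relaxation speeds, the
`ρ̄`-average, and the left/right cell data (density, internal energy, pressure,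
velocity, gravitational potential), initialized at relaxation equilibrium
(`v = u`, `π = p`, `Z = Φ`). -/
structure IFace where
  M : ℝ
  aL : ℝ
  aR : ℝ
  bL : ℝ
  bR : ℝ
  rbar : ℝ
  rhoL : ℝ
  eL : ℝ
  pL : ℝ
  uL : ℝ
  PhiL : ℝ
  rhoR : ℝ
  eR : ℝ
  pR : ℝ
  uR : ℝ
  PhiR : ℝ

namespace IFace

variable (d : IFace)

/-- Intermediate velocity `v*`. -/
noncomputable def vstar : ℝ :=
  (d.M * d.bL * d.uL + d.M * d.bR * d.uR + d.pL - d.pR - d.rbar * (d.PhiR - d.PhiL))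
    / (d.M * (d.bL + d.bR))

/-- Intermediate specific volume `τ^{L*}`. -/
noncomputable def tauLs : ℝ :=
  1 / d.rhoL + (d.M * d.bR * (d.uR - d.uL) + d.pL - d.pR - d.rbar * (d.PhiR - d.PhiL))
    / (d.aL * (d.bL + d.bR))

/-- Intermediate specific volume `τ^{R*}`. -/
noncomputable def tauRs : ℝ :=
  1 / d.rhoR + (d.M * d.bL * (d.uR - d.uL) + d.pR - d.pL + d.rbar * (d.PhiR - d.PhiL))
    / (d.aR * (d.bL + d.bR))

/-- Intermediate velocity `u^{L*}`. -/
noncomputable def uLs : ℝ :=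
  d.uL + d.bL * (d.M * d.bR * (d.uR - d.uL) + d.pL - d.pR - d.rbar * (d.PhiR - d.PhiL))
    / (d.M * d.aL * (d.bL + d.bR))

/-- Intermediate velocity `u^{R*}`. -/
noncomputable def uRs : ℝ :=
  d.uR + d.bR * (d.M * d.bL * (d.uL - d.uR) + d.pL - d.pR - d.rbar * (d.PhiR - d.PhiL))
    / (d.M * d.aR * (d.bL + d.bR))

/-- Intermediate pressure `π^{L*}`. -/
noncomputable def piLs : ℝ :=
  (d.bR * d.pL + d.bL * d.pR + d.M * d.bL * d.bR * (d.uL - d.uR)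
    + d.bL * d.rbar * (d.PhiR - d.PhiL)) / (d.bL + d.bR)

/-- Intermediate pressure `π^{R*}`. -/
noncomputable def piRs : ℝ :=
  (d.bR * d.pL + d.bL * d.pR + d.M * d.bL * d.bR * (d.uL - d.uR)
    - d.bR * d.rbar * (d.PhiR - d.PhiL)) / (d.bL + d.bR)

/-- Intermediate internal energy `e^{L*}`. -/
noncomputable def eLs : ℝ :=
  d.eL + (d.piLs ^ 2 - d.pL ^ 2) / (2 * d.aL * d.bL)
    + ((d.vstar - d.uLs) ^ 2 - (d.uL - d.uL) ^ 2) / (2 * (d.aL / d.bL - 1))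

/-- Intermediate internal energy `e^{R*}`. -/
noncomputable def eRs : ℝ :=
  d.eR + (d.piRs ^ 2 - d.pR ^ 2) / (2 * d.aR * d.bR)
    + ((d.vstar - d.uRs) ^ 2 - (d.uR - d.uR) ^ 2) / (2 * (d.aR / d.bR - 1))

/-- Left wave speed `σ⁻ = v^L − a^L/(M·ρ^L)`. -/
noncomputable def sigm : ℝ := d.uL - d.aL / (d.M * d.rhoL)

/-- Right wave speed `σ⁺ = v^R + a^R/(M·ρ^R)`. -/
noncomputable def sigp : ℝ := d.uR + d.aR / (d.M * d.rhoR)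

/-- Intermediate densities and total energies. -/
noncomputable def rhoLs : ℝ := 1 / d.tauLs
noncomputable def rhoRs : ℝ := 1 / d.tauRs
noncomputable def ELs : ℝ := d.rhoLs * d.eLs + (1 / 2) * d.M ^ 2 * d.rhoLs * d.uLs ^ 2
noncomputable def ERs : ℝ := d.rhoRs * d.eRs + (1 / 2) * d.M ^ 2 * d.rhoRs * d.uRs ^ 2

/-- Total energies of the adjacent cells. -/
noncomputable def EL : ℝ := d.rhoL * d.eL + (1 / 2) * d.M ^ 2 * d.rhoL * d.uL ^ 2
noncomputable def ER : ℝ := d.rhoR * d.eR + (1 / 2) * d.M ^ 2 * d.rhoR * d.uR ^ 2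

/-- The Godunov numerical flux of the two-speed relaxation scheme. -/
noncomputable def flux : ℝ × ℝ × ℝ :=
  if 0 < d.sigm then
    (d.rhoL * d.uL, d.rhoL * d.uL ^ 2 + d.pL / d.M ^ 2, (d.EL + d.pL) * d.uL)
  else if 0 ≤ d.vstar then
    (d.rhoLs * d.vstar, d.rhoLs * d.uLs * d.vstar + d.piLs / d.M ^ 2,
      (d.ELs + d.piLs) * d.vstar)
  else if 0 < d.sigp then
    (d.rhoRs * d.vstar, d.rhoRs * d.uRs * d.vstar + d.piRs / d.M ^ 2,
      (d.ERs + d.piRs) * d.vstar)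
  else
    (d.rhoR * d.uR, d.rhoR * d.uR ^ 2 + d.pR / d.M ^ 2, (d.ER + d.pR) * d.uR)

/-- Numerical source term `S⁺ = −(sgn(v*) + 1)·(0, ρ̄/M², ρ̄·v*)`. -/
noncomputable def srcP : ℝ × ℝ × ℝ :=
  (-(sgn d.vstar + 1)) • ((0 : ℝ), d.rbar / d.M ^ 2, d.rbar * d.vstar)

/-- Numerical source term `S⁻ = (sgn(v*) − 1)·(0, ρ̄/M², ρ̄·v*)`. -/
noncomputable def srcM : ℝ × ℝ × ℝ :=
  (sgn d.vstar - 1) • ((0 : ℝ), d.rbar / d.M ^ 2, d.rbar * d.vstar)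

end IFace

/-- Well-balanced property of the full scheme (Theorem 4): if the velocities vanish in
every cell and the discrete hydrostatic equilibrium
`p_{i+1} − p_i + ρ̄_{i+1/2}·(Φ_{i+1} − Φ_i) = 0` holds at every interface, then the
Godunov update leaves the data `ω_i = (ρ_i, ρ_i·u_i, E_i)` unchanged. -/
theorem scheme_well_balanced
    (dx dt M : ℝ) (hdx : 0 < dx) (hdt : 0 < dt) (hM : 0 < M)
    (rho e p u Phi : ℤ → ℝ) (aL aR bL bR rbar : ℤ → ℝ)
    (hrho : ∀ i, 0 < rho i) (he : ∀ i, 0 < e i) (hp : ∀ i, 0 < p i)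
    (haL : ∀ i, 0 < aL i) (haR : ∀ i, 0 < aR i)
    (hbL : ∀ i, 0 < bL i) (hbR : ∀ i, 0 < bR i)
    (habL : ∀ i, aL i > bL i) (habR : ∀ i, aR i > bR i)
    (D : ℤ → IFace)
    (hD : ∀ i, D i = ⟨M, aL i, aR i, bL i, bR i, rbar i,
        rho i, e i, p i, u i, Phi i,
        rho (i + 1), e (i + 1), p (i + 1), u (i + 1), Phi (i + 1)⟩)
    (htauLs : ∀ i, 0 < (D i).tauLs) (htauRs : ∀ i, 0 < (D i).tauRs)
    (omega : ℤ → ℝ × ℝ × ℝ)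
    (homega : ∀ i, omega i = (rho i, rho i * u i,
        rho i * e i + (1 / 2) * M ^ 2 * rho i * (u i) ^ 2))
    (hu0 : ∀ i, u i = 0)
    (hhydro : ∀ i, p (i + 1) - p i + rbar i * (Phi (i + 1) - Phi i) = 0) :
    ∀ i : ℤ,
      omega i - (dt / dx) • ((D i).flux - (D (i - 1)).flux)
        + (dt / 2) • (((Phi i - Phi (i - 1)) / dx) • (D (i - 1)).srcP
          + ((Phi (i + 1) - Phi i) / dx) • (D i).srcM)
      = omega i := by
  -- v* vanishes at every interface
  have hvstar : ∀ j : ℤ, (D j).vstar = 0 := by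
    intro j
    rw [hD j]
    simp only [IFace.vstar, hu0]
    have h := hhydro j
    have : M * bL j * 0 + M * bR j * 0 + p j - p (j + 1) - rbar j * (Phi (j + 1) - Phi j) = 0 := by
      linarith
    rw [this, zero_div]
  -- π^{L*} equals the left pressure
  have hpiLs : ∀ j : ℤ, (D j).piLs = p j := by
    intro j
    rw [hD j]
    simp only [IFace.piLs, hu0]
    rw [div_eq_iff (by have := hbL j; have := hbR j; positivity)]
    linear_combination (bL j) * hhydro j
  -- the flux at every interface
  have hflux : ∀ j : ℤ, (D j).flux = ((0 : ℝ), p j / M ^ 2, 0) := by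
    intro j
    have hσ : ¬ (0 < (D j).sigm) := by
      rw [hD j]
      simp only [IFace.sigm, hu0]
      have : 0 < aL j / (M * rho j) := by
        have := haL j; have := hrho j; positivity
      push_neg
      linarith
    have hM' : (D j).M = M := by rw [hD j]
    rw [IFace.flux, if_neg hσ, if_pos (le_of_eq (hvstar j).symm), hvstar j, hpiLs j, hM']
    simp
  -- the source terms
  have hsgn : sgn 0 = 1 := by simp [sgn]
  have hsrcP : ∀ j : ℤ, (D j).srcP = ((0 : ℝ), -2 * (rbar j / M ^ 2), 0) := by
    intro j
    have hM' : (D j).M = M := by rw [hD j]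
    have hr : (D j).rbar = rbar j := by rw [hD j]
    rw [IFace.srcP, hvstar j, hsgn, hM', hr]
    simp [Prod.smul_def]
    ring
  have hsrcM : ∀ j : ℤ, (D j).srcM = ((0 : ℝ), 0, 0) := by
    intro j
    rw [IFace.srcM, hvstar j, hsgn]
    simp
    rfl
  -- assemble
  intro i
  rw [hflux i, hflux (i - 1), hsrcP (i - 1), hsrcM i]
  have hh : p i - p (i - 1) + rbar (i - 1) * (Phi i - Phi (i - 1)) = 0 := by
    have := hhydro (i - 1)
    simpa using this
  have hdx' : dx ≠ 0 := ne_of_gt hdx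
  have hM2 : (M : ℝ) ^ 2 ≠ 0 := by positivity
  apply Prod.ext
  · simp [Prod.smul_def]
  · apply Prod.ext
    · simp only [Prod.smul_def, Prod.fst_sub, Prod.snd_sub, Prod.fst_add, Prod.snd_add,
        smul_eq_mul, Prod.snd, Prod.fst]
      have hh' : p i - p (-1 + i) + rbar (-1 + i) * (Phi i - Phi (-1 + i)) = 0 := by
        rw [show (-1 + i : ℤ) = i - 1 by ring]; exact hh
      field_simp
      linear_combination (-2 * dt) * hh
    · simp [Prod.smul_def]
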